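/- arXiv:1508.06898 — 2 statements merged into one kernel-verified Lean document; each statement's English description precedes it below -/
import Mathlib

section
/- For vectors a = (a₁,…,a_m) and c = (c₁,…,c_m) in ℝ^m and any 1 ≤ k ≤ m, the k-th largest entries satisfy |kmax(a) - kmax(c)| ≤ max_{1 ≤ i ≤ m} |aᵢ - cᵢ|, where kmax denotes the k-th largest coordinate. Consequently, if λ_k and λ'_k are the persistence landscape functions of two lists of birth–death pairs (bᵢ,dᵢ) and (b'ᵢ,d'ᵢ), i = 1,…,m, then for every k and every x ∈ ℝ, |λ_k(x) - λ'_k(x)| ≤ max_{1 ≤ i ≤ m} max(|bᵢ - b'ᵢ|, |dᵢ - d'ᵢ|); i.e. persistence landscapes are stable in the supremum norm with respect to perturbations of the birth–death pairs. -/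
/-- The hat function `f_{(b,d)}(x) = max 0 (min (x - b) (d - x))`. -/
noncomputable def hat (b d : ℝ) (x : ℝ) : ℝ := max 0 (min (x - b) (d - x))

/-- The `k`-th largest element of a list of reals (`k ≥ 1`), defined as the
`(k-1)`-st entry of the list sorted in nonincreasing order, and `0` if `k`
exceeds the length of the list. -/
noncomputable def kthLargest (k : ℕ) (l : List ℝ) : ℝ :=
  (l.insertionSort (· ≥ ·)).getD (k - 1) 0

/-- The `k`-th largest coordinate of a vector in `ℝ^m`. -/
noncomputable def kmax (m k : ℕ) (a : Fin m → ℝ) : ℝ := kthLargest k (List.ofFn a)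

/-- The persistence landscape function `λ_k` of the birth--death pairs
`(b i, d i)`, `i = 1, …, m`. -/
noncomputable def landscape (m : ℕ) (b d : Fin m → ℝ) (k : ℕ) (x : ℝ) : ℝ :=
  kthLargest k (List.ofFn fun i => hat (b i) (d i) x)

/-- If a descending-sorted list has at least `j+1` entries `≥ v`, then its
`j`-th entry is `≥ v`. -/
lemma aux_countP_cons_pos (p : ℝ → Bool) (a : ℝ) (l : List ℝ) (h : p a = true) :
    List.countP p (a :: l) = List.countP p l + 1 := by
  rw [List.countP_cons, h]; simp

lemma aux_countP_cons_le (p : ℝ → Bool) (a : ℝ) (l : List ℝ) :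
    List.countP p (a :: l) ≤ List.countP p l + 1 := by
  rw [List.countP_cons]; split <;> omega

/-- If a descending-sorted list has at least `j+1` entries `≥ v`, then its
`j`-th entry is `≥ v`. -/
lemma aux_sorted_getD_ge {v : ℝ} :
    ∀ (s : List ℝ) (j : ℕ), s.Pairwise (· ≥ ·) → j < s.length →
      j + 1 ≤ s.countP (fun x => decide (v ≤ x)) → v ≤ s.getD j 0 := by
  intro s
  induction s with
  | nil => intro j _ hj _; simp at hj
  | cons x t ih =>
    intro j hs hj hc
    cases j with
    | zero =>
      have hpos : 0 < (x :: t).countP (fun x => decide (v ≤ x)) := by omega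
      obtain ⟨y, hy, hvy⟩ := List.countP_pos_iff.mp hpos
      simp only [decide_eq_true_eq] at hvy
      rcases List.mem_cons.mp hy with rfl | hyt
      · simpa using hvy
      · have : y ≤ x := List.rel_of_pairwise_cons hs hyt
        simpa using hvy.trans this
    | succ j =>
      have hle := aux_countP_cons_le (fun x => decide (v ≤ x)) x t
      have hct : j + 1 ≤ t.countP (fun x => decide (v ≤ x)) := by omega
      simp only [List.getD_cons_succ]
      exact ih j hs.of_cons (by simpa using Nat.lt_of_succ_lt_succ hj) hct

/-- A descending-sorted list has at least `j+1` entries `≥` its `j`-th entry. -/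
lemma aux_countP_ge :
    ∀ (s : List ℝ) (j : ℕ), s.Pairwise (· ≥ ·) → j < s.length →
      j + 1 ≤ s.countP (fun x => decide (s.getD j 0 ≤ x)) := by
  intro s
  induction s with
  | nil => intro j _ hj; simp at hj
  | cons x t ih =>
    intro j hs hj
    cases j with
    | zero =>
      have hx : decide ((x :: t).getD 0 0 ≤ x) = true := by simp
      rw [aux_countP_cons_pos _ _ _ hx]
      omega
    | succ j =>
      have hjt : j < t.length := by simpa using Nat.lt_of_succ_lt_succ hj
      have hmem : t.getD j 0 ∈ t := by
        rw [List.getD_eq_getElem _ _ hjt]; exact List.getElem_mem hjt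
      have hx : t.getD j 0 ≤ x := List.rel_of_pairwise_cons hs hmem
      have hpos : decide ((x :: t).getD (j+1) 0 ≤ x) = true := by
        simp only [List.getD_cons_succ]; simpa using hx
      rw [aux_countP_cons_pos _ _ _ hpos]
      have := ih j hs.of_cons hjt
      simp only [List.getD_cons_succ]
      omega

lemma aux_countP_cons_neg (p : ℝ → Bool) (a : ℝ) (l : List ℝ) (h : p a = false) :
    List.countP p (a :: l) = List.countP p l := by
  rw [List.countP_cons, h]; simp

/-- `countP (v ≤ ·)` is monotone under pointwise `≤`. -/
lemma aux_countP_mono {v : ℝ} :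
    ∀ {l₁ l₂ : List ℝ}, List.Forall₂ (· ≤ ·) l₁ l₂ →
      l₁.countP (fun x => decide (v ≤ x)) ≤ l₂.countP (fun x => decide (v ≤ x)) := by
  intro l₁ l₂ h
  induction h with
  | nil => simp
  | @cons a b l₁ l₂ hab _ ih =>
    by_cases hvb : v ≤ b
    · rw [aux_countP_cons_pos _ b l₂ (decide_eq_true hvb)]
      exact le_trans (aux_countP_cons_le _ _ _) (by omega)
    · have hva : ¬ v ≤ a := fun hva => hvb (hva.trans hab)
      rw [aux_countP_cons_neg _ _ _ (by simpa using hva),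
        aux_countP_cons_neg _ _ _ (by simpa using hvb)]
      exact ih

lemma kthLargest_mono {l₁ l₂ : List ℝ} (h : List.Forall₂ (· ≤ ·) l₁ l₂) (k : ℕ)
    (hk1 : 1 ≤ k) (hk2 : k ≤ l₁.length) :
    kthLargest k l₁ ≤ kthLargest k l₂ := by
  have hlen : l₁.length = l₂.length := h.length_eq
  set s₁ := l₁.insertionSort (· ≥ ·) with hs₁
  set s₂ := l₂.insertionSort (· ≥ ·) with hs₂
  have hsort₁ : s₁.Pairwise (· ≥ ·) := List.pairwise_insertionSort _ _
  have hsort₂ : s₂.Pairwise (· ≥ ·) := List.pairwise_insertionSort _ _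
  have hperm₁ : s₁.Perm l₁ := List.perm_insertionSort _ _
  have hperm₂ : s₂.Perm l₂ := List.perm_insertionSort _ _
  have hls₁ : s₁.length = l₁.length := hperm₁.length_eq
  have hls₂ : s₂.length = l₂.length := hperm₂.length_eq
  have hj₁ : k - 1 < s₁.length := by omega
  have hj₂ : k - 1 < s₂.length := by omega
  set v := s₁.getD (k - 1) 0 with hv
  have h1 : k - 1 + 1 ≤ s₁.countP (fun x => decide (v ≤ x)) :=
    aux_countP_ge s₁ (k - 1) hsort₁ hj₁
  have h2 : s₁.countP (fun x => decide (v ≤ x)) = l₁.countP (fun x => decide (v ≤ x)) :=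
    hperm₁.countP_eq _
  have h3 : l₁.countP (fun x => decide (v ≤ x)) ≤ l₂.countP (fun x => decide (v ≤ x)) :=
    aux_countP_mono h
  have h4 : l₂.countP (fun x => decide (v ≤ x)) = s₂.countP (fun x => decide (v ≤ x)) :=
    (hperm₂.countP_eq _).symm
  show v ≤ s₂.getD (k - 1) 0
  exact aux_sorted_getD_ge s₂ (k - 1) hsort₂ hj₂ (by omega)

lemma kthLargest_add_const (l : List ℝ) (ε : ℝ) (k : ℕ) (hk1 : 1 ≤ k) (hk2 : k ≤ l.length) :
    kthLargest k (l.map (· + ε)) = kthLargest k l + ε := by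
  set s := l.insertionSort (· ≥ ·) with hs
  have hsort : s.Pairwise (· ≥ ·) := List.pairwise_insertionSort _ _
  have hperm : s.Perm l := List.perm_insertionSort _ _
  have hsortm : (s.map (· + ε)).Pairwise (· ≥ ·) := by
    refine List.Pairwise.map _ ?_ hsort
    intro a b hab
    simpa using add_le_add_right hab ε
  have key : (l.map (· + ε)).insertionSort (· ≥ ·) = s.map (· + ε) := by
    refine List.Perm.eq_of_pairwise (fun a b _ _ h1 h2 => le_antisymm h2 h1) (List.pairwise_insertionSort _ _) hsortm ?_
    exact (List.perm_insertionSort _ _).trans (hperm.map _).symm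
  unfold kthLargest
  rw [key]
  have hls : s.length = l.length := hperm.length_eq
  have hj : k - 1 < s.length := by omega
  have hjm : k - 1 < (s.map (· + ε)).length := by simpa using hj
  rw [List.getD_eq_getElem _ _ hjm, List.getD_eq_getElem _ _ hj, List.getElem_map]

lemma kmax_abs_sub_le (m k : ℕ) (hk1 : 1 ≤ k) (hk2 : k ≤ m)
    (a c : Fin m → ℝ) (ε : ℝ) (hε : ∀ i, |a i - c i| ≤ ε) :
    |kmax m k a - kmax m k c| ≤ ε := by
  have hone : ∀ (u w : Fin m → ℝ), (∀ i, |u i - w i| ≤ ε) →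
      kmax m k u - kmax m k w ≤ ε := by
    intro u w huw
    have hforall : List.Forall₂ (· ≤ ·) (List.ofFn u) ((List.ofFn w).map (· + ε)) := by
      rw [List.map_ofFn]
      rw [List.forall₂_iff_get]
      refine ⟨by simp, ?_⟩
      intro i h₁ h₂
      simp only [List.get_ofFn, Function.comp_apply]
      have hi : i < m := by simpa using h₁
      have hle := abs_le.mp (huw ⟨i, hi⟩)
      show u ⟨i, hi⟩ ≤ w ⟨i, hi⟩ + ε
      linarith [hle.2]
    have h1 : kmax m k u ≤ kthLargest k ((List.ofFn w).map (· + ε)) :=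
      kthLargest_mono hforall k hk1 (by simpa using hk2)
    have h2 : kthLargest k ((List.ofFn w).map (· + ε)) = kmax m k w + ε :=
      kthLargest_add_const _ _ k hk1 (by simpa using hk2)
    unfold kmax at *
    linarith [h1, h2]
  have h1 := hone a c hε
  have h2 := hone c a fun i => by rw [abs_sub_comm]; exact hε i
  rw [abs_sub_le_iff]
  exact ⟨h1, h2⟩

lemma abs_hat_sub_hat_le (b d b' d' x : ℝ) :
    |hat b d x - hat b' d' x| ≤ max |b - b'| |d - d'| := by
  unfold hat
  calc |max 0 (min (x - b) (d - x)) - max 0 (min (x - b') (d' - x))|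
      ≤ max |(0:ℝ) - 0| |min (x - b) (d - x) - min (x - b') (d' - x)| :=
        abs_max_sub_max_le_max _ _ _ _
    _ ≤ max |(0:ℝ) - 0| (max |(x - b) - (x - b')| |(d - x) - (d' - x)|) := by
        exact max_le_max le_rfl (abs_min_sub_min_le_max _ _ _ _)
    _ ≤ max |b - b'| |d - d'| := by
        have e1 : (x - b) - (x - b') = -(b - b') := by ring
        have e2 : (d - x) - (d' - x) = d - d' := by ring
        rw [e1, e2, abs_neg]
        have h00 : |(0:ℝ) - 0| = 0 := by simp
        rw [h00]
        exact max_le (le_max_of_le_left (abs_nonneg _)) le_rfl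

/-- Stability of the `k`-th largest coordinate and of persistence landscapes:
`|kmax(a) - kmax(c)| ≤ maxᵢ |aᵢ - cᵢ|`, and consequently the landscape functions
of two lists of birth--death pairs satisfy
`|λ_k(x) - λ'_k(x)| ≤ maxᵢ max (|bᵢ - b'ᵢ|) (|dᵢ - d'ᵢ|)`. -/
theorem landscape_stability (m : ℕ) (hm : 1 ≤ m)
    (b d b' d' : Fin m → ℝ) (hbd : ∀ i, b i < d i) (hbd' : ∀ i, b' i < d' i) :
    (∀ (a c : Fin m → ℝ) (k : ℕ), 1 ≤ k → k ≤ m →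
      |kmax m k a - kmax m k c| ≤
        Finset.univ.sup' (Finset.univ_nonempty_iff.mpr ⟨⟨0, hm⟩⟩)
          (fun i => |a i - c i|)) ∧
    (∀ (k : ℕ) (x : ℝ),
      |landscape m b d k x - landscape m b' d' k x| ≤
        Finset.univ.sup' (Finset.univ_nonempty_iff.mpr ⟨⟨0, hm⟩⟩)
          (fun i => max |b i - b' i| |d i - d' i|)) := by
  constructor
  · intro a c k hk1 hk2
    exact kmax_abs_sub_le m k hk1 hk2 a c _
      (fun i => Finset.le_sup' (fun i => |a i - c i|) (Finset.mem_univ i))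
  · intro k x
    have hland : ∀ (bb dd : Fin m → ℝ) (kk : ℕ),
        landscape m bb dd kk x = kmax m kk (fun i => hat (bb i) (dd i) x) := fun _ _ _ => rfl
    have hRnn : (0:ℝ) ≤ Finset.univ.sup' (Finset.univ_nonempty_iff.mpr ⟨⟨0, hm⟩⟩)
        (fun i => max |b i - b' i| |d i - d' i|) := by
      refine le_trans ?_ (Finset.le_sup' _ (Finset.mem_univ (⟨0, hm⟩ : Fin m)))
      exact le_max_of_le_left (abs_nonneg _)
    have hεi : ∀ i : Fin m, |hat (b i) (d i) x - hat (b' i) (d' i) x| ≤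
        Finset.univ.sup' (Finset.univ_nonempty_iff.mpr ⟨⟨0, hm⟩⟩)
          (fun i => max |b i - b' i| |d i - d' i|) := fun i =>
      (abs_hat_sub_hat_le _ _ _ _ _).trans
        (Finset.le_sup' (fun i => max |b i - b' i| |d i - d' i|) (Finset.mem_univ i))
    rcases Nat.lt_or_ge m k with hk | hk
    · -- k > m : both landscapes are 0
      rcases Nat.eq_zero_or_pos k with rfl | hkpos
      · omega
      have hzero : ∀ (bb dd : Fin m → ℝ), landscape m bb dd k x = 0 := by
        intro bb dd
        unfold landscape kthLargest
        apply List.getD_eq_default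
        have : ((List.ofFn fun i => hat (bb i) (dd i) x).insertionSort (· ≥ ·)).length = m := by
          rw [(List.perm_insertionSort _ _).length_eq, List.length_ofFn]
        omega
      rw [hzero, hzero]
      simpa using hRnn
    · rcases Nat.eq_zero_or_pos k with rfl | hkpos
      · -- k = 0 behaves like k = 1
        have h0 : ∀ (bb dd : Fin m → ℝ), landscape m bb dd 0 x = landscape m bb dd 1 x := by
          intro bb dd; rfl
        rw [h0, h0, hland, hland]
        exact kmax_abs_sub_le m 1 le_rfl hm _ _ _ hεi
      · rw [hland, hland]
        exact kmax_abs_sub_le m k hkpos hk _ _ _ hεi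
end

section
/- Let j, k be real numbers with j + 1 < k. Consider the two-point sets D₁ = {(j,k), (j+1,k+1)} and D₂ = {(j,k+1), (j+1,k)} in ℝ². There are exactly two bijections from D₁ to D₂: b₁ given by (j,k) ↦ (j,k+1), (j+1,k+1) ↦ (j+1,k), and b₂ given by (j,k) ↦ (j+1,k), (j+1,k+1) ↦ (j,k+1). For every p ≥ 1 the two bijections have equal p-Wasserstein cost, namely ∑_{x ∈ D₁} ‖x - b₁(x)‖^p = ∑_{x ∈ D₁} ‖x - b₂(x)‖^p = 2 (each point is moved Euclidean distance exactly 1), yet the corresponding sets of midpoints of the matching segments differ: b₁ yields {(j, k+1/2), (j+1, k+1/2)} while b₂ yields {(j+1/2, k), (j+1/2, k+1)}, and these two sets are not equal. Hence the Fréchet mean of two persistence diagrams, defined as the set of midpoints of a cost-minimizing matching, is not well-defined. -/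
/-- A point of the plane `ℝ²` with the Euclidean norm. -/
noncomputable def pt (a c : ℝ) : EuclideanSpace ℝ (Fin 2) := WithLp.toLp 2 ![a, c]


lemma pt_inj {a c a' c' : ℝ} (h : pt a c = pt a' c') : a = a' ∧ c = c' := by
  have h0 := congrArg (fun v => v 0) h
  have h1 := congrArg (fun v => v 1) h
  simp [pt] at h0 h1
  exact ⟨h0, h1⟩

lemma pt_sub (a c a' c' : ℝ) : pt a c - pt a' c' = pt (a - a') (c - c') := by
  ext i
  fin_cases i <;> simp [pt]

lemma norm_pt (a c : ℝ) : ‖pt a c‖ = Real.sqrt (a ^ 2 + c ^ 2) := by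
  simp [pt, EuclideanSpace.norm_eq, Fin.sum_univ_two, sq_abs]

lemma midpoint_pt (a c a' c' : ℝ) :
    midpoint ℝ (pt a c) (pt a' c') = pt ((a + a') / 2) ((c + c') / 2) := by
  rw [midpoint_eq_smul_add]
  ext i
  fin_cases i <;> simp [pt] <;> ring

/-- Non-uniqueness of the Fréchet mean of two persistence diagrams.  For `j + 1 < k`,
consider `D₁ = {(j,k), (j+1,k+1)}` and `D₂ = {(j,k+1), (j+1,k)}`.  There are exactly
two bijections `D₁ → D₂`, namely `b₁ : (j,k) ↦ (j,k+1), (j+1,k+1) ↦ (j+1,k)` and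
`b₂ : (j,k) ↦ (j+1,k), (j+1,k+1) ↦ (j,k+1)`.  Both move each point Euclidean
distance exactly `1`, so for every `p ≥ 1` they have the same `p`-Wasserstein cost
`∑_{x ∈ D₁} ‖x - b(x)‖^p = 2`, yet their sets of matching-segment midpoints differ:
`{(j,k+1/2), (j+1,k+1/2)}` versus `{(j+1/2,k), (j+1/2,k+1)}`.  Hence the Fréchet
mean is not well-defined. -/
theorem frechet_mean_not_well_defined (j k : ℝ) (hjk : j + 1 < k)
    (A B A' B' : EuclideanSpace ℝ (Fin 2))
    (hA : A = pt j k) (hB : B = pt (j + 1) (k + 1))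
    (hA' : A' = pt j (k + 1)) (hB' : B' = pt (j + 1) k)
    (b₁ b₂ : EuclideanSpace ℝ (Fin 2) → EuclideanSpace ℝ (Fin 2))
    (hb₁A : b₁ A = A') (hb₁B : b₁ B = B')
    (hb₂A : b₂ A = B') (hb₂B : b₂ B = A') :
    -- b₁ and b₂ are bijections from D₁ = {A, B} onto D₂ = {A', B'}
    Set.BijOn b₁ {A, B} {A', B'} ∧ Set.BijOn b₂ {A, B} {A', B'} ∧
    -- they are distinct on D₁, and every bijection D₁ → D₂ agrees on D₁ with
    -- one of them: there are exactly two bijections from D₁ to D₂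
    ¬ Set.EqOn b₁ b₂ {A, B} ∧
    (∀ f : EuclideanSpace ℝ (Fin 2) → EuclideanSpace ℝ (Fin 2),
      Set.BijOn f {A, B} {A', B'} →
        Set.EqOn f b₁ {A, B} ∨ Set.EqOn f b₂ {A, B}) ∧
    -- each point is moved Euclidean distance exactly 1
    (‖A - b₁ A‖ = 1 ∧ ‖B - b₁ B‖ = 1 ∧ ‖A - b₂ A‖ = 1 ∧ ‖B - b₂ B‖ = 1) ∧
    -- for every p ≥ 1 the two bijections have equal p-Wasserstein cost, namely 2
    (∀ p : ℝ, 1 ≤ p →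
      ‖A - b₁ A‖ ^ p + ‖B - b₁ B‖ ^ p = 2 ∧
      ‖A - b₂ A‖ ^ p + ‖B - b₂ B‖ ^ p = 2) ∧
    -- the corresponding sets of midpoints of the matching segments differ
    ({midpoint ℝ A (b₁ A), midpoint ℝ B (b₁ B)} : Set (EuclideanSpace ℝ (Fin 2))) =
      {pt j (k + 1/2), pt (j + 1) (k + 1/2)} ∧
    ({midpoint ℝ A (b₂ A), midpoint ℝ B (b₂ B)} : Set (EuclideanSpace ℝ (Fin 2))) =
      {pt (j + 1/2) k, pt (j + 1/2) (k + 1)} ∧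
    ({midpoint ℝ A (b₁ A), midpoint ℝ B (b₁ B)} : Set (EuclideanSpace ℝ (Fin 2))) ≠
      {midpoint ℝ A (b₂ A), midpoint ℝ B (b₂ B)} := by
  subst hA hB hA' hB'
  have hAB : pt j k ≠ pt (j + 1) (k + 1) := fun h => by
    have := (pt_inj h).1; linarith
  have hA'B' : pt j (k + 1) ≠ pt (j + 1) k := fun h => by
    have := (pt_inj h).1; linarith
  have hn1 : ‖pt j k - b₁ (pt j k)‖ = 1 := by
    rw [hb₁A, pt_sub, norm_pt]; norm_num
  have hn2 : ‖pt (j + 1) (k + 1) - b₁ (pt (j + 1) (k + 1))‖ = 1 := by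
    rw [hb₁B, pt_sub, norm_pt]; norm_num
  have hn3 : ‖pt j k - b₂ (pt j k)‖ = 1 := by
    rw [hb₂A, pt_sub, norm_pt]; norm_num
  have hn4 : ‖pt (j + 1) (k + 1) - b₂ (pt (j + 1) (k + 1))‖ = 1 := by
    rw [hb₂B, pt_sub, norm_pt]; norm_num
  have bij : ∀ (g : EuclideanSpace ℝ (Fin 2) → EuclideanSpace ℝ (Fin 2)),
      g (pt j k) = pt j (k + 1) → g (pt (j + 1) (k + 1)) = pt (j + 1) k →
      Set.BijOn g {pt j k, pt (j + 1) (k + 1)} {pt j (k + 1), pt (j + 1) k} := by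
    intro g h1 h2
    refine ⟨?_, ?_, ?_⟩
    · rintro x (rfl | rfl) <;> simp [h1, h2]
    · rintro x (rfl | rfl) y (rfl | rfl) h
      · rfl
      · rw [h1, h2] at h; exact absurd h hA'B'
      · rw [h1, h2] at h; exact absurd h.symm hA'B'
      · rfl
    · rintro y (rfl | rfl)
      · exact ⟨pt j k, by simp, h1⟩
      · exact ⟨pt (j + 1) (k + 1), by simp, h2⟩
  have bij' : ∀ (g : EuclideanSpace ℝ (Fin 2) → EuclideanSpace ℝ (Fin 2)),
      g (pt j k) = pt (j + 1) k → g (pt (j + 1) (k + 1)) = pt j (k + 1) →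
      Set.BijOn g {pt j k, pt (j + 1) (k + 1)} {pt j (k + 1), pt (j + 1) k} := by
    intro g h1 h2
    refine ⟨?_, ?_, ?_⟩
    · rintro x (rfl | rfl) <;> simp [h1, h2]
    · rintro x (rfl | rfl) y (rfl | rfl) h
      · rfl
      · rw [h1, h2] at h; exact absurd h.symm hA'B'
      · rw [h1, h2] at h; exact absurd h hA'B'
      · rfl
    · rintro y (rfl | rfl)
      · exact ⟨pt (j + 1) (k + 1), by simp, h2⟩
      · exact ⟨pt j k, by simp, h1⟩
  refine ⟨bij b₁ hb₁A hb₁B, bij' b₂ hb₂A hb₂B, ?_, ?_, ⟨hn1, hn2, hn3, hn4⟩, ?_, ?_, ?_, ?_⟩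
  · intro h
    have := h (Set.mem_insert _ _)
    rw [hb₁A, hb₂A] at this
    exact hA'B' this
  · intro f hf
    have hfA : f (pt j k) ∈ ({pt j (k + 1), pt (j + 1) k} : Set _) :=
      hf.mapsTo (Set.mem_insert _ _)
    have hfB : f (pt (j + 1) (k + 1)) ∈ ({pt j (k + 1), pt (j + 1) k} : Set _) :=
      hf.mapsTo (by simp)
    rcases hfA with h1 | h1
    · left
      have h2 : f (pt (j + 1) (k + 1)) = pt (j + 1) k := by
        rcases hfB with h2 | h2
        · exact absurd (hf.injOn (Set.mem_insert _ _) (by simp) (h1.trans h2.symm)) hAB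
        · exact h2
      rintro x (rfl | rfl)
      · rw [h1, hb₁A]
      · rw [h2, hb₁B]
    · right
      have h2 : f (pt (j + 1) (k + 1)) = pt j (k + 1) := by
        rcases hfB with h2 | h2
        · exact h2
        · exact absurd (hf.injOn (Set.mem_insert _ _) (by simp) (h1.trans h2.symm)) hAB
      rintro x (rfl | rfl)
      · rw [h1, hb₂A]
      · rw [h2, hb₂B]
  · intro p hp
    rw [hn1, hn2, hn3, hn4, Real.one_rpow]
    norm_num
  · rw [hb₁A, hb₁B, midpoint_pt, midpoint_pt,
      show (j + j) / 2 = j by ring, show (k + (k + 1)) / 2 = k + 1/2 by ring,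
      show (j + 1 + (j + 1)) / 2 = j + 1 by ring, show (k + 1 + k) / 2 = k + 1/2 by ring]
  · rw [hb₂A, hb₂B, midpoint_pt, midpoint_pt,
      show (j + (j + 1)) / 2 = j + 1/2 by ring, show (k + k) / 2 = k by ring,
      show (j + 1 + j) / 2 = j + 1/2 by ring, show (k + 1 + (k + 1)) / 2 = k + 1 by ring]
  · rw [hb₁A, hb₁B, hb₂A, hb₂B, midpoint_pt, midpoint_pt, midpoint_pt, midpoint_pt]
    intro h
    have hm : pt ((j + j) / 2) ((k + (k + 1)) / 2) ∈
        ({pt ((j + (j + 1)) / 2) ((k + k) / 2),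
          pt ((j + 1 + j) / 2) ((k + 1 + (k + 1)) / 2)} : Set _) := by
      rw [← h]; exact Set.mem_insert _ _
    rcases hm with h' | h' <;> (have := (pt_inj h').1; linarith)
end
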